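/- Let β ∈ (1/5, 1], η > 0, A ≥ 0, and suppose η' = η/β and A' ≥ A with A' ≥ 0. Define a = (η + √(η² + 4ηA))/2 and a' = (η' + √(η'² + 4η'A'))/2. Then a'/(A' + a') ≤ (1/√β)·(a/(A + a)). -/

import Mathlib

set_option maxHeartbeats 1000000


/-- Case I of the ratio bound for the Monteiro–Svaiter weights:
increasing the step size by `1/β` while the weight does not decrease. -/
theorem stmt11
    (β η A η' A' : ℝ)
    (hβ0 : 1 / 5 < β) (hβ1 : β ≤ 1) (hη : 0 < η) (hA : 0 ≤ A)
    (hη' : η' = η / β) (hA'A : A ≤ A') (hA'0 : 0 ≤ A')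
    (a a' : ℝ)
    (ha : a = (η + Real.sqrt (η ^ 2 + 4 * η * A)) / 2)
    (ha' : a' = (η' + Real.sqrt (η' ^ 2 + 4 * η' * A')) / 2) :
    a' / (A' + a') ≤ (1 / Real.sqrt β) * (a / (A + a)) := by
  have hβpos : 0 < β := lt_trans (by norm_num) hβ0
  have hη'pos : 0 < η' := hη'.symm ▸ div_pos hη hβpos
  have hsb : 0 < Real.sqrt β := Real.sqrt_pos.mpr hβpos
  have hsb2 : Real.sqrt β ^ 2 = β := Real.sq_sqrt hβpos.le
  set s := Real.sqrt (η ^ 2 + 4 * η * A) with hsdef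
  set s' := Real.sqrt (η' ^ 2 + 4 * η' * A') with hs'def
  have hs0 : 0 ≤ s := Real.sqrt_nonneg _
  have hs'0 : 0 ≤ s' := Real.sqrt_nonneg _
  have hs2 : s ^ 2 = η ^ 2 + 4 * η * A := Real.sq_sqrt (by positivity)
  have hs'2 : s' ^ 2 = η' ^ 2 + 4 * η' * A' := Real.sq_sqrt (by positivity)
  have hapos : 0 < a := by rw [ha]; positivity
  have ha'pos : 0 < a' := by rw [ha']; positivity
  have hAa : 0 < A + a := by linarith
  have hA'a' : 0 < A' + a' := by linarith
  have ha2 : a ^ 2 = η * (A + a) := by rw [ha]; nlinarith [hs2]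
  have ha'2 : a' ^ 2 = η' * (A' + a') := by rw [ha']; nlinarith [hs'2]
  -- √ of radicand comparison
  have hss : s ≤ Real.sqrt β * s' := by
    rw [hs'def, ← Real.sqrt_mul hβpos.le, hsdef]
    apply Real.sqrt_le_sqrt
    rw [hη']
    have h1 : η ^ 2 ≤ β * (η / β) ^ 2 := by
      have he : β * (η / β) ^ 2 = η ^ 2 / β := by field_simp
      rw [he, le_div_iff₀ hβpos]
      nlinarith [sq_nonneg η]
    have h2 : β * (4 * (η / β) * A') = 4 * η * A' := by field_simp
    have h3 : β * ((η / β) ^ 2 + 4 * (η / β) * A')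
        = β * (η / β) ^ 2 + β * (4 * (η / β) * A') := by ring
    have h4 : 4 * η * A ≤ 4 * η * A' := by nlinarith
    linarith
  have hηη' : η ≤ Real.sqrt β * η' := by
    rw [hη']
    have he : Real.sqrt β * (η / β) = η / Real.sqrt β := by
      rw [mul_div_assoc', div_eq_div_iff hβpos.ne' hsb.ne']; linear_combination η * hsb2
    rw [he, le_div_iff₀ hsb]
    nlinarith [Real.sqrt_le_one.mpr hβ1]
  have key : a ≤ Real.sqrt β * a' := by
    rw [ha, ha']
    have he : Real.sqrt β * ((η' + s') / 2)
        = (Real.sqrt β * η' + Real.sqrt β * s') / 2 := by ring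
    rw [he]
    linarith
  -- rewrite both ratios as η/a form
  have hL : a' / (A' + a') = η' / a' := by
    rw [div_eq_div_iff hA'a'.ne' ha'pos.ne']
    nlinarith [ha'2]
  have hR : a / (A + a) = η / a := by
    rw [div_eq_div_iff hAa.ne' hapos.ne']
    nlinarith [ha2]
  rw [hL, hR]
  have hRe : (1 / Real.sqrt β) * (η / a) = η / (Real.sqrt β * a) := by
    field_simp
  rw [hRe, div_le_div_iff₀ ha'pos (mul_pos hsb hapos)]
  have hk : η * a ≤ η * (Real.sqrt β * a') := mul_le_mul_of_nonneg_left key hη.le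
  have hk2 := mul_le_mul_of_nonneg_right hk hsb.le
  rw [hη', div_mul_eq_mul_div, div_le_iff₀ hβpos]
  nlinarith [hk2, hsb2]
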